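/- Let H be a real Hilbert space, P an orthogonal projection, k, χ > 0, and suppose v, ṽ, u ∈ H satisfy (v − ṽ)/k − χ P(u − v) = 0. Then ‖v‖² − ‖ṽ‖² + ‖ṽ − v‖² + kχ‖P v‖² ≤ 3kχ‖P u‖² + 3kχ‖(I−P)v‖². -/

import Mathlib

theorem stmt14 {H : Type*} [NormedAddCommGroup H] [InnerProductSpace ℝ H] [CompleteSpace H]
    (P : H →ₗ[ℝ] H) (hP2 : P ∘ₗ P = P)
    (hPsa : ∀ x y : H, inner ℝ (P x) y = (inner ℝ x (P y) : ℝ))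
    (k χ : ℝ) (hk : 0 < k) (hχ : 0 < χ)
    (v vt u : H) (h : (1 / k) • (v - vt) - χ • P (u - v) = 0) :
    ‖v‖ ^ 2 - ‖vt‖ ^ 2 + ‖vt - v‖ ^ 2 + k * χ * ‖P v‖ ^ 2
      ≤ 3 * (k * χ) * ‖P u‖ ^ 2 + 3 * (k * χ) * ‖v - P v‖ ^ 2 := by
  have hP2' : ∀ x : H, P (P x) = P x := by
    intro x
    have := congrArg (fun f => f x) hP2
    simpa using this
  -- from h: v - vt = (k*χ) • P (u - v)
  have hvt : v - vt = (k * χ) • P (u - v) := by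
    have h1 : (1 / k) • (v - vt) = χ • P (u - v) := by
      have := sub_eq_zero.mp h
      exact this
    have := congrArg (fun x : H => k • x) h1
    simp only [smul_smul] at this
    rw [mul_one_div, div_self hk.ne', one_smul] at this
    exact this
  -- key inner ℝ product identities
  have hPvv : (inner ℝ (P v) v : ℝ) = ‖P v‖ ^ 2 := by
    have h1 : (inner ℝ (P v) (P v) : ℝ) = inner ℝ v (P v) := by
      rw [hPsa v (P v), hP2' v]
    rw [hPsa v v, ← h1, real_inner_self_eq_norm_sq]
  have hPuv : (inner ℝ (P u) v : ℝ) = inner ℝ (P u) (P v) := by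
    rw [hPsa u v, ← hP2' v, ← hPsa u (P v), hP2' v]
  -- ‖v‖² - ‖vt‖² + ‖vt - v‖² = 2⟨v - vt, v⟩
  have hpol : ‖v‖ ^ 2 - ‖vt‖ ^ 2 + ‖vt - v‖ ^ 2 = 2 * inner ℝ (v - vt) v := by
    have h1 : ‖vt - v‖ ^ 2 = ‖vt‖ ^ 2 - 2 * inner ℝ vt v + ‖v‖ ^ 2 := by
      rw [norm_sub_sq_real]
    have h2 : (inner ℝ (v - vt) v : ℝ) = inner ℝ v v - inner ℝ vt v := by
      rw [inner_sub_left]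
    rw [h1, h2, real_inner_self_eq_norm_sq]
    ring
  have hinner : (inner ℝ (v - vt) v : ℝ) = (k * χ) * (inner ℝ (P u) (P v) - ‖P v‖ ^ 2) := by
    rw [hvt, real_inner_smul_left]
    have : P (u - v) = P u - P v := by rw [map_sub]
    rw [this, inner_sub_left, hPvv, hPuv]
  have hCS : (inner ℝ (P u) (P v) : ℝ) ≤ ‖P u‖ * ‖P v‖ := real_inner_le_norm _ _
  have hkχ : 0 < k * χ := mul_pos hk hχ
  have hsq : 0 ≤ ‖v - P v‖ ^ 2 := sq_nonneg _
  have h2ab : 2 * (inner ℝ (P u) (P v) : ℝ) ≤ ‖P u‖ ^ 2 + ‖P v‖ ^ 2 := by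
    nlinarith [sq_nonneg (‖P u‖ - ‖P v‖)]
  rw [hpol, hinner]
  nlinarith [sq_nonneg (‖P u‖ : ℝ), sq_nonneg (‖P v‖ : ℝ)]
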